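/- Let f_2(λ) := λ·(log λ)²/(1−λ) for λ ∈ (0,1). There exists a unique λ̃_2 ∈ (0,1) such that log λ̃_2 + 2 − 2λ̃_2 = 0 (numerically λ̃_2 ≈ 0.2032), and λ̃_2 ∈ (0, 1/2). Moreover f_2′(λ) > 0 for λ ∈ (0, λ̃_2) and f_2′(λ) < 0 for λ ∈ (λ̃_2, 1), so that sup_{λ∈(0,1)} f_2(λ) = f_2(λ̃_2) and λ̃_2 is the unique maximizer of f_2 on (0,1). -/

import Mathlib

open Set

private noncomputable def gaux : ℝ → ℝ := fun l => Real.log l + 2 - 2 * l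

private lemma gaux_hasDerivAt {x : ℝ} (hx : 0 < x) :
    HasDerivAt gaux (x⁻¹ - 2) x := by
  have h1 : HasDerivAt (fun l : ℝ => Real.log l + 2) (x⁻¹) x :=
    (Real.hasDerivAt_log hx.ne').add_const 2
  have h2 : HasDerivAt (fun l : ℝ => 2 * l) 2 x := by
    simpa using (hasDerivAt_id x).const_mul 2
  exact h1.sub h2

private lemma gaux_contOn {s : Set ℝ} (hs : ∀ x ∈ s, 0 < x) : ContinuousOn gaux s := by
  intro x hx
  exact (((Real.continuousAt_log (hs x hx).ne').add continuousAt_const).sub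
    (continuousAt_const.mul continuousAt_id)).continuousWithinAt

private lemma gaux_strictMono : StrictMonoOn gaux (Set.Ioc 0 (1/2)) := by
  apply strictMonoOn_of_deriv_pos (convex_Ioc _ _)
    (gaux_contOn (fun x hx => hx.1))
  intro x hx
  rw [interior_Ioc] at hx
  rw [(gaux_hasDerivAt hx.1).deriv]
  have hxi : x * x⁻¹ = 1 := mul_inv_cancel₀ hx.1.ne'
  nlinarith [hx.1, hx.2]

private lemma gaux_strictAnti : StrictAntiOn gaux (Set.Icc (1/2) 1) := by
  apply strictAntiOn_of_deriv_neg (convex_Icc _ _)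
    (gaux_contOn (fun x hx => by linarith [hx.1]))
  intro x hx
  rw [interior_Icc] at hx
  rw [(gaux_hasDerivAt (by linarith [hx.1])).deriv]
  have hxi : x * x⁻¹ = 1 := mul_inv_cancel₀ (by linarith [hx.1] : (0:ℝ) < x).ne'
  nlinarith [hx.1, hx.2]

private lemma gaux_one : gaux 1 = 0 := by simp [gaux]

private lemma gaux_pos_of_half {l : ℝ} (h1 : 1/2 ≤ l) (h2 : l < 1) : 0 < gaux l := by
  have := gaux_strictAnti ⟨h1, h2.le⟩ ⟨by norm_num, le_refl 1⟩ h2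
  rw [gaux_one] at this
  linarith

private lemma f₂_hasDerivAt {x : ℝ} (hx0 : 0 < x) (hx1 : x < 1) :
    HasDerivAt (fun l : ℝ => l * (Real.log l) ^ 2 / (1 - l))
      (Real.log x * (Real.log x + 2 - 2 * x) / (1 - x) ^ 2) x := by
  have hne : (1 : ℝ) - x ≠ 0 := by linarith
  have h2 : HasDerivAt (fun l : ℝ => (Real.log l) ^ 2)
      (2 * (Real.log x) ^ 1 * x⁻¹) x := (Real.hasDerivAt_log hx0.ne').pow 2
  have hu : HasDerivAt (fun l : ℝ => l * (Real.log l) ^ 2)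
      (1 * (Real.log x) ^ 2 + x * (2 * (Real.log x) ^ 1 * x⁻¹)) x :=
    (hasDerivAt_id x).mul h2
  have hv : HasDerivAt (fun l : ℝ => 1 - l) (-1) x := by
    simpa using (hasDerivAt_id x).const_sub 1
  have := hu.div hv hne
  refine this.congr_deriv ?_
  field_simp
  ring

private lemma f₂_contOn {s : Set ℝ} (hs : ∀ x ∈ s, 0 < x ∧ x < 1) :
    ContinuousOn (fun l : ℝ => l * (Real.log l) ^ 2 / (1 - l)) s := by
  intro x hx
  obtain ⟨hx0, hx1⟩ := hs x hx
  exact ((continuousAt_id.mul ((Real.continuousAt_log hx0.ne').pow 2)).div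
    (continuousAt_const.sub continuousAt_id) (by simpa using sub_ne_zero.mpr hx1.ne')).continuousWithinAt

/-- The function `f₂(λ) = λ(log λ)²/(1−λ)` on `(0,1)` has a unique critical point
`λ̃₂ ∈ (0, 1/2)`, characterized by `log λ̃₂ + 2 − 2λ̃₂ = 0`; `f₂` increases before it,
decreases after it, and it is the unique maximizer of `f₂` on `(0,1)`. -/
theorem stmt_7 (f₂ : ℝ → ℝ)
    (hf₂ : ∀ l, f₂ l = l * (Real.log l) ^ 2 / (1 - l)) :
    ∃ l₂ : ℝ,
      (l₂ ∈ Set.Ioo (0 : ℝ) 1 ∧ Real.log l₂ + 2 - 2 * l₂ = 0) ∧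
      (∀ l ∈ Set.Ioo (0 : ℝ) 1, Real.log l + 2 - 2 * l = 0 → l = l₂) ∧
      l₂ ∈ Set.Ioo (0 : ℝ) (1 / 2) ∧
      (∀ l ∈ Set.Ioo (0 : ℝ) l₂, 0 < deriv f₂ l) ∧
      (∀ l ∈ Set.Ioo l₂ 1, deriv f₂ l < 0) ∧
      sSup (f₂ '' Set.Ioo (0 : ℝ) 1) = f₂ l₂ ∧
      (∀ l ∈ Set.Ioo (0 : ℝ) 1, l ≠ l₂ → f₂ l < f₂ l₂) := by
  have hf : f₂ = fun l => l * (Real.log l) ^ 2 / (1 - l) := funext hf₂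
  -- existence of root via IVT
  set a : ℝ := Real.exp (-2) with ha
  have ha0 : 0 < a := Real.exp_pos _
  have ha_half : a < 1/2 := by
    have h3 : (3:ℝ) ≤ Real.exp 2 := by
      have := Real.add_one_le_exp (2:ℝ); linarith
    have : Real.exp (-2) = (Real.exp 2)⁻¹ := by rw [Real.exp_neg]
    rw [ha, this]
    rw [show (1:ℝ)/2 = (2:ℝ)⁻¹ by norm_num]
    exact inv_strictAnti₀ (by norm_num) (by linarith)
  have hga : gaux a < 0 := by
    simp only [gaux, ha, Real.log_exp]
    linarith [Real.exp_pos (-2:ℝ)]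
  have hghalf : 0 < gaux (1/2) := by
    have hlog2 : Real.log 2 < 1 := by
      have := Real.log_lt_sub_one_of_pos (by norm_num : (0:ℝ) < 2) (by norm_num)
      linarith
    have : Real.log (1/2) = -Real.log 2 := by
      rw [one_div, Real.log_inv]
    simp only [gaux, this]
    linarith
  have hivt : (0:ℝ) ∈ gaux '' Set.Ioo a (1/2) := by
    apply intermediate_value_Ioo ha_half.le (gaux_contOn (fun x hx => lt_of_lt_of_le ha0 hx.1))
    exact ⟨hga, hghalf⟩
  obtain ⟨l₂, hl₂mem, hl₂g⟩ := hivt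
  have hl₂0 : 0 < l₂ := lt_trans ha0 hl₂mem.1
  have hl₂half : l₂ < 1/2 := hl₂mem.2
  have hl₂1 : l₂ < 1 := by linarith
  -- g negative before l₂ on (0, l₂), positive after on (l₂, 1)
  have hl₂Ioc : l₂ ∈ Set.Ioc (0:ℝ) (1/2) := ⟨hl₂0, hl₂half.le⟩
  have hg_neg : ∀ l ∈ Set.Ioo (0:ℝ) l₂, gaux l < 0 := by
    intro l hl
    have := gaux_strictMono ⟨hl.1, by linarith [hl.2]⟩ hl₂Ioc hl.2
    rwa [hl₂g] at this
  have hg_pos : ∀ l ∈ Set.Ioo l₂ 1, 0 < gaux l := by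
    intro l hl
    rcases le_or_gt l (1/2) with h | h
    · have := gaux_strictMono hl₂Ioc ⟨by linarith [hl.1], h⟩ hl.1
      rwa [hl₂g] at this
    · exact gaux_pos_of_half h.le hl.2
  -- uniqueness of root
  have huniq : ∀ l ∈ Set.Ioo (0:ℝ) 1, Real.log l + 2 - 2 * l = 0 → l = l₂ := by
    intro l hl hgl
    have hgl' : gaux l = 0 := hgl
    rcases lt_trichotomy l l₂ with h | h | h
    · exact absurd hgl' (hg_neg l ⟨hl.1, h⟩).ne
    · exact h
    · exact absurd hgl' (hg_pos l ⟨h, hl.2⟩).ne'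
  -- derivative formula and signs
  have hderiv : ∀ l ∈ Set.Ioo (0:ℝ) 1,
      deriv f₂ l = Real.log l * gaux l / (1 - l) ^ 2 := by
    intro l hl
    rw [hf]
    exact (f₂_hasDerivAt hl.1 hl.2).deriv
  have hpos : ∀ l ∈ Set.Ioo (0:ℝ) l₂, 0 < deriv f₂ l := by
    intro l hl
    have hl1 : l < 1 := by linarith [hl.2]
    rw [hderiv l ⟨hl.1, hl1⟩]
    exact div_pos (mul_pos_of_neg_of_neg (Real.log_neg hl.1 hl1) (hg_neg l hl))
      (pow_pos (by linarith) 2)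
  have hneg : ∀ l ∈ Set.Ioo l₂ 1, deriv f₂ l < 0 := by
    intro l hl
    have hl0 : 0 < l := lt_trans hl₂0 hl.1
    rw [hderiv l ⟨hl0, hl.2⟩]
    exact div_neg_of_neg_of_pos (mul_neg_of_neg_of_pos (Real.log_neg hl0 hl.2) (hg_pos l hl))
      (pow_pos (by linarith [hl.2]) 2)
  -- monotonicity
  have hmono : StrictMonoOn f₂ (Set.Ioc 0 l₂) := by
    apply strictMonoOn_of_deriv_pos (convex_Ioc _ _)
    · rw [hf]; exact f₂_contOn (fun x hx => ⟨hx.1, by linarith [hx.2]⟩)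
    · intro x hx
      rw [interior_Ioc] at hx
      exact hpos x hx
  have hanti : StrictAntiOn f₂ (Set.Ico l₂ 1) := by
    apply strictAntiOn_of_deriv_neg (convex_Ico _ _)
    · rw [hf]; exact f₂_contOn (fun x hx => ⟨lt_of_lt_of_le hl₂0 hx.1, hx.2⟩)
    · intro x hx
      rw [interior_Ico] at hx
      exact hneg x hx
  have hmax : ∀ l ∈ Set.Ioo (0:ℝ) 1, l ≠ l₂ → f₂ l < f₂ l₂ := by
    intro l hl hne
    rcases lt_or_gt_of_ne hne with h | h
    · exact hmono ⟨hl.1, h.le⟩ ⟨hl₂0, le_refl _⟩ h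
    · exact hanti ⟨le_refl _, hl₂1⟩ ⟨h.le, hl.2⟩ h
  have hgreat : IsGreatest (f₂ '' Set.Ioo (0:ℝ) 1) (f₂ l₂) := by
    constructor
    · exact ⟨l₂, ⟨hl₂0, hl₂1⟩, rfl⟩
    · rintro y ⟨l, hl, rfl⟩
      rcases eq_or_ne l l₂ with h | h
      · rw [h]
      · exact (hmax l hl h).le
  exact ⟨l₂, ⟨⟨hl₂0, hl₂1⟩, hl₂g⟩, huniq, ⟨hl₂0, hl₂half⟩, hpos, hneg,
    hgreat.csSup_eq, hmax⟩
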